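/- arXiv:2302.00007 — 2 statements merged into one kernel-verified Lean document; each statement's English description precedes it below -/
import Mathlib

section
/- Let φ₁ : DihedralGroup 2 →* DihedralGroup 6 be the homomorphism induced by the additive map ZMod 2 → ZMod 6, i ↦ 3i, and φ₂ : DihedralGroup 2 →* DihedralGroup 4 the one induced by i ↦ 2i (both injective). Then there is a group isomorphism Ψ from the amalgamated free product (DihedralGroup 6) *_{DihedralGroup 2} (DihedralGroup 4) (the pushout of φ₁ and φ₂) onto GL(2,ℤ) such that Ψ(ι₁(r 1)) = U, Ψ(ι₂(r 1)) = S, and Ψ(ι₂(sr 0)) = R. (This is the decomposition GL(2,ℤ) ≅ D₁₂ *_{D₄} D₈.) -/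
/-- The matrix `S = !![0,-1; 1,0]` as an element of `GL(2,ℤ)`. -/
def S : Matrix.GeneralLinearGroup (Fin 2) ℤ :=
  ⟨!![0, -1; 1, 0], !![0, 1; -1, 0], by decide, by decide⟩

/-- The matrix `U = !![0,-1; 1,1]` as an element of `GL(2,ℤ)`. -/
def U : Matrix.GeneralLinearGroup (Fin 2) ℤ :=
  ⟨!![0, -1; 1, 1], !![1, 1; -1, 0], by decide, by decide⟩

/-- The matrix `R = !![0,1; 1,0]` as an element of `GL(2,ℤ)`. -/
def R : Matrix.GeneralLinearGroup (Fin 2) ℤ :=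
  ⟨!![0, 1; 1, 0], !![0, 1; 1, 0], by decide, by decide⟩

/-- The two factors `D₁₂ = DihedralGroup 6` (at `false`) and `D₈ = DihedralGroup 4`
(at `true`) of the amalgamated free product. -/
def Fac : Bool → Type
  | false => DihedralGroup 6
  | true => DihedralGroup 4

instance instFacGroup : ∀ b, Group (Fac b)
  | false => inferInstanceAs (Group (DihedralGroup 6))
  | true => inferInstanceAs (Group (DihedralGroup 4))

/-- The family of amalgamating maps `D₄ → D₁₂` and `D₄ → D₈`. -/
def fam (φ₁ : DihedralGroup 2 →* DihedralGroup 6) (φ₂ : DihedralGroup 2 →* DihedralGroup 4) :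
    ∀ b, DihedralGroup 2 →* Fac b
  | false => φ₁
  | true => φ₂

/- ######### auxiliary definitions ######### -/


instance instFacDecEq : ∀ b, DecidableEq (Fac b)
  | false => inferInstanceAs (DecidableEq (DihedralGroup 6))
  | true => inferInstanceAs (DecidableEq (DihedralGroup 4))

open DihedralGroup Monoid

abbrev GL2 := Matrix.GeneralLinearGroup (Fin 2) ℤ

def g1fun : DihedralGroup 6 → GL2
  | r i => U ^ i.val
  | sr i => R * U ^ i.val

def g2fun : DihedralGroup 4 → GL2
  | r i => S ^ i.val
  | sr i => R * S ^ i.val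

set_option maxHeartbeats 1000000 in
def g1 : DihedralGroup 6 →* GL2 :=
  MonoidHom.mk' g1fun (by decide)

set_option maxHeartbeats 1000000 in
def g2 : DihedralGroup 4 →* GL2 :=
  MonoidHom.mk' g2fun (by decide)

def Gfam : ∀ b, Fac b →* GL2
  | false => g1
  | true => g2

def F (l : Σ b, Fac b) : GL2 := Gfam l.1 l.2

/-- The ping-pong invariant: `Re((M·i)/(denominator))` up to positive factor. -/
def pInv (g : GL2) : ℤ :=
  g.val 0 0 * g.val 1 0 + g.val 0 1 * g.val 1 1

lemma det_pm (g : GL2) : g.val.det = 1 ∨ g.val.det = -1 :=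
  Int.isUnit_iff.mp ((Matrix.isUnit_iff_isUnit_det g.val).mp g.isUnit)

lemma row1_pos (g : GL2) : 1 ≤ g.val 1 0 ^ 2 + g.val 1 1 ^ 2 := by
  by_contra hlt
  push_neg at hlt
  have h0 : g.val 1 0 = 0 ∧ g.val 1 1 = 0 := by
    constructor <;> nlinarith [sq_nonneg (g.val 1 0), sq_nonneg (g.val 1 1)]
  rcases det_pm g with h | h <;>
    rw [Matrix.det_fin_two, h0.1, h0.2] at h <;> simp at h
lemma row0_pos (g : GL2) : 1 ≤ g.val 0 0 ^ 2 + g.val 0 1 ^ 2 := by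
  by_contra hlt
  push_neg at hlt
  have h0 : g.val 0 0 = 0 ∧ g.val 0 1 = 0 := by
    constructor <;> nlinarith [sq_nonneg (g.val 0 0), sq_nonneg (g.val 0 1)]
  rcases det_pm g with h | h <;>
    rw [Matrix.det_fin_two, h0.1, h0.2] at h <;> simp at h

lemma U_val : U.val = !![0, -1; 1, 1] := rfl
lemma S_val : S.val = !![0, -1; 1, 0] := rfl

lemma pU_mul (g : GL2) : pInv (U * g) = -pInv g - (g.val 1 0 ^ 2 + g.val 1 1 ^ 2) := by
  simp [pInv, Units.val_mul, U_val, Matrix.mul_apply, Fin.sum_univ_two]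
  ring

lemma pUU_mul (g : GL2) : pInv (U * U * g) = -pInv g - (g.val 0 0 ^ 2 + g.val 0 1 ^ 2) := by
  simp [pInv, Units.val_mul, U_val, Matrix.mul_apply, Fin.sum_univ_two]
  ring

lemma pS_mul (g : GL2) : pInv (S * g) = -pInv g := by
  simp [pInv, Units.val_mul, S_val, Matrix.mul_apply, Fin.sum_univ_two]
  ring

def okL : (Σ b, Fac b) → Prop
  | ⟨false, x⟩ => x = r 1 ∨ x = r 2
  | ⟨true, x⟩ => x = r 1

lemma g1_r1 : g1 (r 1) = U := by decide
lemma g1_r2 : g1 (r 2) = U * U := by decide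
lemma g2_r1 : g2 (r 1) = S := by decide

lemma pInv_one : pInv 1 = 0 := by decide
lemma pInv_S : pInv S = 0 := by decide

/-- The ping-pong lemma for alternating words in `{U, U²}` and `{S}`. -/
lemma core : ∀ L : List (Σ b, Fac b), L.Chain' (fun a b => a.1 ≠ b.1) →
    (∀ l ∈ L, okL l) → ∀ a t, L = a :: t →
    ((a.1 = false → pInv (L.map F).prod < 0) ∧
     (a.1 = true → ((L.map F).prod = S ∨ 0 < pInv (L.map F).prod))) := by
  intro L
  induction L with
  | nil => intro _ _ a t h; cases h
  | cons a t IH =>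
    intro hch hok a' t' heq
    cases heq
    change List.IsChain _ (a :: t) at hch
    rw [List.isChain_cons] at hch
    have hokt : ∀ l ∈ t, okL l := fun l hl => hok l (List.mem_cons_of_mem a hl)
    have hoka : okL a := hok a List.mem_cons_self
    simp only [List.map_cons, List.prod_cons]
    set N : GL2 := (t.map F).prod with hN
    obtain ⟨ba, xa⟩ := a
    cases ba
    · -- a = ⟨false, xa⟩, so F a ∈ {U, U²}
      -- first establish 0 ≤ pInv N
      have hpN : 0 ≤ pInv N := by
        cases t with
        | nil => simp [hN, pInv_one]
        | cons b t2 =>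
          have hb1 : b.1 = true := by
            have := hch.1 b rfl
            simp only at this
            revert this
            cases b.1 <;> simp
          rcases (IH hch.2 hokt b t2 rfl).2 hb1 with h | h
          · rw [h, pInv_S]
          · exact le_of_lt h
      have hFa : F ⟨false, xa⟩ = g1 xa := rfl
      constructor
      · intro _
        rcases hoka with hx | hx
        · rw [hFa, hx, g1_r1, pU_mul]
          have := row1_pos N
          linarith
        · rw [hFa, hx, g1_r2, pUU_mul]
          have := row0_pos N
          linarith
      · intro h; exact absurd h (by simp)
    · -- a = ⟨true, xa⟩, F a = S
      have hxa : xa = r 1 := hoka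
      have hFa : F ⟨true, xa⟩ = S := by rw [show F ⟨true, xa⟩ = g2 xa from rfl, hxa, g2_r1]
      constructor
      · intro h; exact absurd h (by simp)
      · intro _
        cases t with
        | nil => left; simp [hFa, hN]
        | cons b t2 =>
          have hb1 : b.1 = false := by
            have := hch.1 b rfl
            simp only at this
            revert this
            cases b.1 <;> simp
          have hpN : pInv N < 0 := (IH hch.2 hokt b t2 rfl).1 hb1
          right
          rw [hFa, pS_mul]
          linarith

/- ############ surjectivity : U, S, R generate GL(2,ℤ) ############ -/

lemma Tm_val : ∀ n : ℤ, ((S⁻¹ * U) ^ n : GL2).val = !![1, n; 0, 1] := by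
  have h1 : ((S⁻¹ * U : GL2)).val = !![1, 1; 0, 1] := by decide
  have h2 : (((S⁻¹ * U)⁻¹ : GL2)).val = !![1, -1; 0, 1] := by decide
  intro n
  induction n using Int.induction_on with
  | zero => simp [Matrix.one_fin_two]
  | succ k ih =>
    rw [zpow_add_one, Units.val_mul, ih, h1]
    ext i j
    fin_cases i <;> fin_cases j <;> simp [Matrix.mul_fin_two] <;> ring
  | pred k ih =>
    rw [zpow_sub_one, Units.val_mul, ih, h2]
    ext i j
    fin_cases i <;> fin_cases j <;> simp [Matrix.mul_fin_two] <;> ring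

set_option maxHeartbeats 1000000 in
lemma generates (Hs : Subgroup GL2) (hU : U ∈ Hs) (hS : S ∈ Hs) (hR : R ∈ Hs) :
    ∀ g : GL2, g ∈ Hs := by
  have hT : (S⁻¹ * U : GL2) ∈ Hs := mul_mem (inv_mem hS) hU
  suffices h : ∀ n : ℕ, ∀ g : GL2, (g.val 1 0).natAbs = n → g ∈ Hs by
    exact fun g => h _ g rfl
  intro n
  induction n using Nat.strong_induction_on with
  | _ n IH =>
  intro g hg
  by_cases hc : g.val 1 0 = 0
  · obtain ⟨b0, hb0⟩ : ∃ b0, g.val 0 1 = b0 := ⟨_, rfl⟩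
 -- triangular case
    have hdet := det_pm g
    rw [Matrix.det_fin_two, hc, mul_zero, sub_zero] at hdet
    rcases hdet with h | h
    · rcases Int.eq_one_or_neg_one_of_mul_eq_one' h with ⟨ha, hd⟩ | ⟨ha, hd⟩
      · have hval : g.val = !![1, b0; 0, 1] := by
          conv_lhs => rw [Matrix.eta_fin_two g.val]
          rw [ha, hc, hd, hb0]
        have hgeq : g = (S⁻¹ * U) ^ b0 := by
          apply Units.ext
          rw [hval, Tm_val]
        rw [hgeq]
        exact zpow_mem hT _
      · have hval : g.val = !![-1, b0; 0, -1] := by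
          conv_lhs => rw [Matrix.eta_fin_two g.val]
          rw [ha, hc, hd, hb0]
        have hgeq : g = (S * S) * (S⁻¹ * U) ^ (-b0) := by
          apply Units.ext
          rw [hval, Units.val_mul, Tm_val, show ((S * S : GL2)).val = !![-1,0;0,-1] by decide]
          ext i j
          fin_cases i <;> fin_cases j <;> simp [Matrix.mul_fin_two]
        rw [hgeq]
        exact mul_mem (mul_mem hS hS) (zpow_mem hT _)
    · have h' : g.val 0 0 * (-(g.val 1 1)) = 1 := by linear_combination -h
      rcases Int.eq_one_or_neg_one_of_mul_eq_one' h' with ⟨ha, hd⟩ | ⟨ha, hd⟩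
      · have hd2 : g.val 1 1 = -1 := by omega
        have hval : g.val = !![1, b0; 0, -1] := by
          conv_lhs => rw [Matrix.eta_fin_two g.val]
          rw [ha, hc, hd2, hb0]
        have hgeq : g = (S⁻¹ * U) ^ (-b0) * (R * S) := by
          apply Units.ext
          rw [hval, Units.val_mul, Tm_val, show ((R * S : GL2)).val = !![1,0;0,-1] by decide]
          ext i j
          fin_cases i <;> fin_cases j <;> simp [Matrix.mul_fin_two]
        rw [hgeq]
        exact mul_mem (zpow_mem hT _) (mul_mem hR hS)
      · have hd2 : g.val 1 1 = 1 := by omega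
        have hval : g.val = !![-1, b0; 0, 1] := by
          conv_lhs => rw [Matrix.eta_fin_two g.val]
          rw [ha, hc, hd2, hb0]
        have hgeq : g = (S * S) * ((S⁻¹ * U) ^ b0 * (R * S)) := by
          apply Units.ext
          rw [hval]
          simp only [Units.val_mul, Tm_val,
            show ((R * S : GL2)).val = !![1,0;0,-1] by decide,
            show ((S * S : GL2)).val = !![-1,0;0,-1] by decide]
          ext i j
          fin_cases i <;> fin_cases j <;> simp [Matrix.mul_fin_two]
        rw [hgeq]
        exact mul_mem (mul_mem hS hS) (mul_mem (zpow_mem hT _) (mul_mem hR hS))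
  · -- Euclidean step
    set q : ℤ := g.val 0 0 / g.val 1 0 with hq
    set g' : GL2 := S * (S⁻¹ * U) ^ (-q) * g with hg'
    have hent : g'.val 1 0 = g.val 0 0 - g.val 1 0 * q := by
      rw [hg', Units.val_mul, Units.val_mul, Tm_val, S_val]
      simp [Matrix.mul_apply, Fin.sum_univ_two, Matrix.vecMul, Matrix.vecHead, Matrix.vecTail,
        dotProduct]
      ring
    have hlt : (g'.val 1 0).natAbs < n := by
      rw [hent, hq, ← Int.emod_def]
      have h1 : 0 ≤ g.val 0 0 % g.val 1 0 := Int.emod_nonneg _ hc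
      have h2 : g.val 0 0 % g.val 1 0 < |g.val 1 0| := Int.emod_lt_abs _ hc
      rw [← hg]
      rw [Int.abs_eq_natAbs] at h2
      omega
    have hg'mem : g' ∈ Hs := IH _ hlt g' rfl
    have : g = (S * (S⁻¹ * U) ^ (-q))⁻¹ * g' := by
      rw [hg', inv_mul_cancel_left]
    rw [this]
    exact mul_mem (inv_mem (mul_mem hS (zpow_mem hT _))) hg'mem

/- ############ transversal data ############ -/

def tset : ∀ b, Set (Fac b)
  | false => (↑({1, r 1, r 2} : Finset (DihedralGroup 6)) : Set (DihedralGroup 6))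
  | true => (↑({1, r 1} : Finset (DihedralGroup 4)) : Set (DihedralGroup 4))

lemma tset_false_eq : tset false = (↑({1, r 1, r 2} : Finset (DihedralGroup 6)) : Set (DihedralGroup 6)) := rfl
lemma tset_true_eq : tset true = (↑({1, r 1} : Finset (DihedralGroup 4)) : Set (DihedralGroup 4)) := rfl

lemma tset_one_mem : ∀ b, (1 : Fac b) ∈ tset b := by
  intro b; cases b <;> simp [tset_false_eq, tset_true_eq] <;> exact Set.mem_insert _ _

lemma compl_false : Subgroup.IsComplement
    (↑({1, r 3, sr 0, sr 3} : Finset (DihedralGroup 6)) : Set (DihedralGroup 6)) (tset false) := by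
  rw [tset_false_eq]
  unfold Subgroup.IsComplement
  decide

lemma compl_true : Subgroup.IsComplement
    (↑({1, r 2, sr 0, sr 2} : Finset (DihedralGroup 4)) : Set (DihedralGroup 4)) (tset true) := by
  rw [tset_true_eq]
  unfold Subgroup.IsComplement
  decide

/-- `GL(2,ℤ)` is the amalgamated free product `D₁₂ *_{D₄} D₈`, amalgamated along the
homomorphisms induced by the additive maps `ZMod 2 → ZMod 6, i ↦ 3i` and
`ZMod 2 → ZMod 4, i ↦ 2i`, via an isomorphism sending `r 1` of `D₁₂` to `U`,
`r 1` of `D₈` to `S`, and `sr 0` of `D₈` to `R`. -/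
theorem gl2z_is_amalgamated_product
    (f₁ : ZMod 2 →+ ZMod 6) (f₂ : ZMod 2 →+ ZMod 4)
    (hf₁ : f₁ 1 = 3) (hf₂ : f₂ 1 = 2)
    (φ₁ : DihedralGroup 2 →* DihedralGroup 6) (φ₂ : DihedralGroup 2 →* DihedralGroup 4)
    (hφ₁ : Function.Injective φ₁) (hφ₂ : Function.Injective φ₂)
    (hφ₁r : ∀ i : ZMod 2, φ₁ (DihedralGroup.r i) = DihedralGroup.r (f₁ i))
    (hφ₁sr : ∀ i : ZMod 2, φ₁ (DihedralGroup.sr i) = DihedralGroup.sr (f₁ i))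
    (hφ₂r : ∀ i : ZMod 2, φ₂ (DihedralGroup.r i) = DihedralGroup.r (f₂ i))
    (hφ₂sr : ∀ i : ZMod 2, φ₂ (DihedralGroup.sr i) = DihedralGroup.sr (f₂ i)) :
    ∃ Ψ : Monoid.PushoutI (fam φ₁ φ₂) ≃* Matrix.GeneralLinearGroup (Fin 2) ℤ,
      Ψ (Monoid.PushoutI.of (φ := fam φ₁ φ₂) false (DihedralGroup.r 1)) = U ∧
      Ψ (Monoid.PushoutI.of (φ := fam φ₁ φ₂) true (DihedralGroup.r 1)) = S ∧
      Ψ (Monoid.PushoutI.of (φ := fam φ₁ φ₂) true (DihedralGroup.sr 0)) = R := by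
  classical
  have h01 : ∀ i : ZMod 2, i = 0 ∨ i = 1 := by decide
  -- explicit values of φ₁ and φ₂
  have hx1r0 : φ₁ (r 0) = r 0 := by rw [hφ₁r, map_zero]
  have hx1r : φ₁ (r 1) = r 3 := by rw [hφ₁r, hf₁]
  have hx1sr0 : φ₁ (sr 0) = sr 0 := by rw [hφ₁sr, map_zero]
  have hx1sr1 : φ₁ (sr 1) = sr 3 := by rw [hφ₁sr, hf₁]
  have hx2r0 : φ₂ (r 0) = r 0 := by rw [hφ₂r, map_zero]
  have hx2r : φ₂ (r 1) = r 2 := by rw [hφ₂r, hf₂]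
  have hx2sr0 : φ₂ (sr 0) = sr 0 := by rw [hφ₂sr, map_zero]
  have hx2sr1 : φ₂ (sr 1) = sr 2 := by rw [hφ₂sr, hf₂]
  -- ranges
  have hrange1 : (φ₁.range : Set (DihedralGroup 6)) =
      (↑({1, r 3, sr 0, sr 3} : Finset (DihedralGroup 6)) : Set (DihedralGroup 6)) := by
    ext x
    simp only [SetLike.mem_coe, MonoidHom.mem_range, Finset.coe_insert, Set.mem_insert_iff,
      Finset.coe_singleton, Set.mem_singleton_iff]
    constructor
    · rintro ⟨y, rfl⟩
      cases y with
      | r i =>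
        rcases h01 i with rfl | rfl
        · rw [hx1r0, ← DihedralGroup.one_def]; tauto
        · rw [hx1r]; tauto
      | sr i =>
        rcases h01 i with rfl | rfl
        · rw [hx1sr0]; tauto
        · rw [hx1sr1]; tauto
    · rintro (rfl | rfl | rfl | rfl)
      exacts [⟨1, map_one φ₁⟩, ⟨r 1, hx1r⟩, ⟨sr 0, hx1sr0⟩, ⟨sr 1, hx1sr1⟩]
  have hrange2 : (φ₂.range : Set (DihedralGroup 4)) =
      (↑({1, r 2, sr 0, sr 2} : Finset (DihedralGroup 4)) : Set (DihedralGroup 4)) := by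
    ext x
    simp only [SetLike.mem_coe, MonoidHom.mem_range, Finset.coe_insert, Set.mem_insert_iff,
      Finset.coe_singleton, Set.mem_singleton_iff]
    constructor
    · rintro ⟨y, rfl⟩
      cases y with
      | r i =>
        rcases h01 i with rfl | rfl
        · rw [hx2r0, ← DihedralGroup.one_def]; tauto
        · rw [hx2r]; tauto
      | sr i =>
        rcases h01 i with rfl | rfl
        · rw [hx2sr0]; tauto
        · rw [hx2sr1]; tauto
    · rintro (rfl | rfl | rfl | rfl)
      exacts [⟨1, map_one φ₂⟩, ⟨r 1, hx2r⟩, ⟨sr 0, hx2sr0⟩, ⟨sr 1, hx2sr1⟩]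
  -- the transversal
  let d : Monoid.PushoutI.NormalWord.Transversal (fam φ₁ φ₂) :=
    { injective := by
        intro b
        cases b
        · exact hφ₁
        · exact hφ₂
      set := tset
      one_mem := tset_one_mem
      compl := by
        intro b
        cases b
        · show Subgroup.IsComplement (φ₁.range : Set (DihedralGroup 6)) (tset false)
          rw [hrange1]; exact compl_false
        · show Subgroup.IsComplement (φ₂.range : Set (DihedralGroup 4)) (tset true)
          rw [hrange2]; exact compl_true }
  -- the lifted homomorphism
  have hcomp : ∀ b, (Gfam b).comp (fam φ₁ φ₂ b) = g2.comp φ₂ := by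
    intro b
    cases b
    · show g1.comp φ₁ = g2.comp φ₂
      refine MonoidHom.ext fun x => ?_
      cases x with
      | r i =>
        rcases h01 i with rfl | rfl
        · rw [MonoidHom.comp_apply, MonoidHom.comp_apply, hx1r0, hx2r0]; decide
        · rw [MonoidHom.comp_apply, MonoidHom.comp_apply, hx1r, hx2r]; decide
      | sr i =>
        rcases h01 i with rfl | rfl
        · rw [MonoidHom.comp_apply, MonoidHom.comp_apply, hx1sr0, hx2sr0]; decide
        · rw [MonoidHom.comp_apply, MonoidHom.comp_apply, hx1sr1, hx2sr1]; decide
    · rfl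
  let Ψ₀ : Monoid.PushoutI (fam φ₁ φ₂) →* GL2 :=
    Monoid.PushoutI.lift Gfam (g2.comp φ₂) hcomp
  -- injectivity
  have hinj : Function.Injective Ψ₀ := by
    rw [injective_iff_map_eq_one]
    intro x hx
    set w : Monoid.PushoutI.NormalWord d := Monoid.PushoutI.NormalWord.equiv (d := d) x with hw
    have hxw : w.prod = x := (Monoid.PushoutI.NormalWord.equiv (d := d)).left_inv x
    have hprod : Monoid.PushoutI.base (fam φ₁ φ₂) w.head *
        Monoid.PushoutI.ofCoprodI w.toWord.prod = x := hxw
    have hmap : Ψ₀ (Monoid.PushoutI.ofCoprodI w.toWord.prod) = (w.toList.map F).prod := by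
      have h1 : w.toWord.prod = (w.toList.map fun l => Monoid.CoprodI.of l.2).prod := rfl
      rw [h1, ← MonoidHom.comp_apply, map_list_prod, List.map_map]
      refine congrArg List.prod (List.map_congr_left fun l _ => ?_)
      obtain ⟨i, y⟩ := l
      show Ψ₀ (Monoid.PushoutI.ofCoprodI (Monoid.CoprodI.of y)) = Gfam i y
      rw [Monoid.PushoutI.ofCoprodI_of]
      exact Monoid.PushoutI.lift_of _ _ _ _
    have hone : ∀ h' : DihedralGroup 2, g2 (φ₂ h') = 1 → h' = 1 := by
      intro h'
      cases h' with
      | r i =>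
        rcases h01 i with rfl | rfl
        · intro _; exact DihedralGroup.one_def.symm
        · rw [hx2r]; intro hcon; exact absurd hcon (by decide)
      | sr i =>
        rcases h01 i with rfl | rfl
        · rw [hx2sr0]; intro hcon; exact absurd hcon (by decide)
        · rw [hx2sr1]; intro hcon; exact absurd hcon (by decide)
    cases hL : w.toList with
    | nil =>
      have h2 : w.toWord.prod = 1 := by
        rw [show w.toWord.prod = (w.toList.map fun l => Monoid.CoprodI.of l.2).prod from rfl, hL]
        simp
      rw [← hprod, h2, map_one, mul_one] at hx ⊢
      rw [Monoid.PushoutI.lift_base] at hx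
      have : w.head = 1 := hone _ hx
      rw [this, map_one]
    | cons a t =>
      exfalso
      have hok : ∀ l ∈ w.toList, okL l := by
        intro l hl
        have hne := w.ne_one l hl
        have hmem : l.2 ∈ tset l.1 := w.normalized l.1 l.2 ((Sigma.eta l).symm ▸ hl)
        obtain ⟨i, y⟩ := l
        cases i
        · have hmem' : @Membership.mem (DihedralGroup 6) (Finset (DihedralGroup 6)) _ {1, r 1, r 2} y := by
            rw [tset_false_eq] at hmem; exact Finset.mem_coe.mp hmem
          replace hmem' := (Finset.mem_insert.mp hmem').imp_right fun h => (Finset.mem_insert.mp h).imp_right Finset.mem_singleton.mp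
          rcases hmem' with h | h | h
          · exact absurd h hne
          · exact Or.inl h
          · exact Or.inr h
        · have hmem' : @Membership.mem (DihedralGroup 4) (Finset (DihedralGroup 4)) _ {1, r 1} y := by
            rw [tset_true_eq] at hmem; exact Finset.mem_coe.mp hmem
          replace hmem' := (Finset.mem_insert.mp hmem').imp_right Finset.mem_singleton.mp
          rcases hmem' with h | h
          · exact absurd h hne
          · exact h
      have hcore := core w.toList w.chain_ne hok a t hL
      have hΨx : Ψ₀ x = g2 (φ₂ w.head) * (w.toList.map F).prod := by
        rw [← hprod, map_mul, hmap, Monoid.PushoutI.lift_base]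
        rfl
      have hyx : g2 (φ₂ w.head) * (w.toList.map F).prod = 1 := by rw [← hΨx]; exact hx
      have hP : (w.toList.map F).prod = (g2 (φ₂ w.head))⁻¹ := eq_inv_of_mul_eq_one_right hyx
      have hzero : pInv ((g2 (φ₂ w.head))⁻¹) = 0 ∧ S ≠ (g2 (φ₂ w.head))⁻¹ := by
        cases hh : w.head with
        | r i =>
          rcases h01 i with rfl | rfl
          · rw [hx2r0]; exact ⟨by decide, by decide⟩
          · rw [hx2r]; exact ⟨by decide, by decide⟩
        | sr i =>
          rcases h01 i with rfl | rfl
          · rw [hx2sr0]; exact ⟨by decide, by decide⟩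
          · rw [hx2sr1]; exact ⟨by decide, by decide⟩
      obtain ⟨ab, ax⟩ := a
      cases ab
      · have := hcore.1 rfl
        rw [hP, hzero.1] at this
        exact absurd this (by norm_num)
      · rcases hcore.2 rfl with hSeq | hpos
        · exact hzero.2 (by rw [← hSeq, hP])
        · rw [hP, hzero.1] at hpos
          exact absurd hpos (by norm_num)
  -- surjectivity
  have hUmem : U ∈ Ψ₀.range := ⟨Monoid.PushoutI.of (φ := fam φ₁ φ₂) false (r 1), by
    rw [show Ψ₀ (Monoid.PushoutI.of (φ := fam φ₁ φ₂) false (r 1)) = g1 (r 1) from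
      Monoid.PushoutI.lift_of _ _ _ _, g1_r1]⟩
  have hSmem : S ∈ Ψ₀.range := ⟨Monoid.PushoutI.of (φ := fam φ₁ φ₂) true (r 1), by
    rw [show Ψ₀ (Monoid.PushoutI.of (φ := fam φ₁ φ₂) true (r 1)) = g2 (r 1) from
      Monoid.PushoutI.lift_of _ _ _ _, g2_r1]⟩
  have hRmem : R ∈ Ψ₀.range := ⟨Monoid.PushoutI.of (φ := fam φ₁ φ₂) true (sr 0), by
    rw [show Ψ₀ (Monoid.PushoutI.of (φ := fam φ₁ φ₂) true (sr 0)) = g2 (sr 0) from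
      Monoid.PushoutI.lift_of _ _ _ _]
    decide⟩
  have hsurj : Function.Surjective Ψ₀ := by
    intro g
    exact generates Ψ₀.range hUmem hSmem hRmem g
  refine ⟨MulEquiv.ofBijective Ψ₀ ⟨hinj, hsurj⟩, ?_, ?_, ?_⟩
  · show Ψ₀ (Monoid.PushoutI.of (φ := fam φ₁ φ₂) false (r 1)) = U
    rw [show Ψ₀ (Monoid.PushoutI.of (φ := fam φ₁ φ₂) false (r 1)) = g1 (r 1) from
      Monoid.PushoutI.lift_of _ _ _ _, g1_r1]
  · show Ψ₀ (Monoid.PushoutI.of (φ := fam φ₁ φ₂) true (r 1)) = S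
    rw [show Ψ₀ (Monoid.PushoutI.of (φ := fam φ₁ φ₂) true (r 1)) = g2 (r 1) from
      Monoid.PushoutI.lift_of _ _ _ _, g2_r1]
  · show Ψ₀ (Monoid.PushoutI.of (φ := fam φ₁ φ₂) true (sr 0)) = R
    rw [show Ψ₀ (Monoid.PushoutI.of (φ := fam φ₁ φ₂) true (sr 0)) = g2 (sr 0) from
      Monoid.PushoutI.lift_of _ _ _ _]
    decide
end

section
/- The map DihedralGroup 8 → GL⁺(2,ℤ) sending r i ↦ ŝ^i and sr i ↦ r̂·ŝ^i (exponents taken via any integer representative of i ∈ ZMod 8; well defined since ŝ⁸ = 1) is an injective group homomorphism. Hence ŝ and r̂ generate a subgroup of GL⁺(2,ℤ) isomorphic to the dihedral group of order 16. -/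
/-- The three generators `û`, `ŝ`, `r̂` of the Pin⁺ cover of `GL(2,ℤ)`. -/
inductive GLGen
  | u | s | r

/-- The relators `ŝ⁸`, `r̂²`, `r̂ŝr̂⁻¹ŝ`, `r̂ûr̂⁻¹û`, `ŝ²û⁻³`. -/
def glRels : Set (FreeGroup GLGen) :=
  { (FreeGroup.of GLGen.s) ^ 8,
    (FreeGroup.of GLGen.r) ^ 2,
    FreeGroup.of GLGen.r * FreeGroup.of GLGen.s * (FreeGroup.of GLGen.r)⁻¹ * FreeGroup.of GLGen.s,
    FreeGroup.of GLGen.r * FreeGroup.of GLGen.u * (FreeGroup.of GLGen.r)⁻¹ * FreeGroup.of GLGen.u,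
    (FreeGroup.of GLGen.s) ^ 2 * ((FreeGroup.of GLGen.u) ^ 3)⁻¹ }

/-- The Pin⁺ cover `GL⁺(2,ℤ)` of `GL(2,ℤ)`. -/
abbrev GLplus : Type := PresentedGroup glRels

/-- The generator `û` of `GL⁺(2,ℤ)`. -/
def uhat : GLplus := PresentedGroup.of GLGen.u

/-- The generator `ŝ` of `GL⁺(2,ℤ)`. -/
def shat : GLplus := PresentedGroup.of GLGen.s

/-- The generator `r̂` of `GL⁺(2,ℤ)`. -/
def rhat : GLplus := PresentedGroup.of GLGen.r

lemma glrel_one {x : FreeGroup GLGen} (h : x ∈ glRels) :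
    PresentedGroup.mk glRels x = 1 :=
  (QuotientGroup.eq_one_iff x).mpr (Subgroup.subset_normalClosure h)

lemma shat8 : shat ^ 8 = 1 := by
  have := glrel_one (x := (FreeGroup.of GLGen.s) ^ 8) (by simp [glRels])
  simpa [map_pow, shat, PresentedGroup.of] using this

lemma rhat2 : rhat * rhat = 1 := by
  have := glrel_one (x := (FreeGroup.of GLGen.r) ^ 2) (by simp [glRels])
  simpa [pow_two, map_mul, rhat, PresentedGroup.of] using this

lemma rhat_inv : rhat⁻¹ = rhat := by
  rw [inv_eq_iff_mul_eq_one, rhat2]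

lemma rconj : rhat * shat * rhat⁻¹ = shat⁻¹ := by
  have := glrel_one (x := FreeGroup.of GLGen.r * FreeGroup.of GLGen.s *
      (FreeGroup.of GLGen.r)⁻¹ * FreeGroup.of GLGen.s) (by simp [glRels])
  simp only [map_mul, map_inv] at this
  rw [eq_inv_iff_mul_eq_one]
  exact this

lemma shat8z : shat ^ (8:ℤ) = 1 := by exact_mod_cast shat8

/-- `S i = shat ^ i.val`. -/
def Sp (i : ZMod 8) : GLplus := shat ^ i.val

lemma Sz (n : ℤ) : shat ^ n = Sp (n : ZMod 8) := by
  have hd : (8:ℤ) ∣ n - (((n : ZMod 8).val : ℤ)) := by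
    have : ((n - ((n : ZMod 8).val : ℤ) : ℤ) : ZMod 8) = 0 := by
      push_cast [ZMod.natCast_val, ZMod.cast_id]
      ring
    exact (ZMod.intCast_zmod_eq_zero_iff_dvd _ 8).mp this
  obtain ⟨k, hk⟩ := hd
  have hn : n = ((n : ZMod 8).val : ℤ) + 8 * k := by linarith
  conv_lhs => rw [hn]
  rw [zpow_add, zpow_mul, shat8z, one_zpow, mul_one, zpow_natCast]
  rfl

lemma Sadd (i j : ZMod 8) : Sp i * Sp j = Sp (i + j) := by
  have : Sp i * Sp j = shat ^ ((i.val : ℤ) + (j.val : ℤ)) := by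
    rw [zpow_add, zpow_natCast, zpow_natCast]; rfl
  rw [this, Sz]
  congr 1

lemma Sconj (i : ZMod 8) : rhat * Sp i * rhat = Sp (-i) := by
  have h1 : rhat * shat ^ ((i.val : ℤ)) * rhat⁻¹ = shat ^ (-(i.val : ℤ)) := by
    have := map_zpow (MulAut.conj rhat) shat ((i.val : ℤ))
    simp only [MulAut.conj_apply, rconj] at this
    rw [this, inv_zpow, ← zpow_neg]
  rw [rhat_inv] at h1
  have h2 : rhat * Sp i * rhat = shat ^ (-(i.val : ℤ)) := by
    rw [← h1]; simp only [Sp, zpow_natCast]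
  rw [h2, Sz]
  congr 1
  push_cast [ZMod.natCast_val, ZMod.cast_id]
  ring_nf

lemma Srh (i : ZMod 8) : Sp i * rhat = rhat * Sp (-i) := by
  have := Sconj (-i)
  rw [neg_neg] at this
  calc Sp i * rhat = rhat * Sp (-i) * rhat * rhat := by rw [this]
  _ = rhat * Sp (-i) * (rhat * rhat) := by group
  _ = rhat * Sp (-i) := by rw [rhat2, mul_one]

/-- the underlying map `DihedralGroup 8 → GLplus`. -/
def F0 : DihedralGroup 8 → GLplus
  | .r i => Sp i
  | .sr i => rhat * Sp i

lemma F0_mul (x y : DihedralGroup 8) : F0 (x * y) = F0 x * F0 y := by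
  cases x with
  | r i => cases y with
    | r j => show Sp (i + j) = Sp i * Sp j; rw [Sadd]
    | sr j =>
        show rhat * Sp (j - i) = Sp i * (rhat * Sp j)
        rw [← mul_assoc, Srh, mul_assoc, Sadd]
        congr 1; ring
  | sr i => cases y with
    | r j =>
        show rhat * Sp (i + j) = rhat * Sp i * Sp j
        rw [mul_assoc, Sadd]
    | sr j =>
        show Sp (j - i) = rhat * Sp i * (rhat * Sp j)
        rw [mul_assoc, ← mul_assoc (Sp i), Srh, ← mul_assoc, ← mul_assoc, rhat2, one_mul, Sadd]
        congr 1; ring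

/-- the homomorphism `DihedralGroup 8 →* GLplus`. -/
def Fhom : DihedralGroup 8 →* GLplus where
  toFun := F0
  map_one' := by show Sp 0 = 1; simp [Sp, ZMod.val_zero]
  map_mul' := F0_mul

/-- The target map for the retraction `GLplus →* DihedralGroup 8`. -/
def gmap : GLGen → DihedralGroup 8
  | .u => .r 6
  | .s => .r 1
  | .r => .sr 0

lemma gmap_rels : ∀ x ∈ glRels, FreeGroup.lift gmap x = 1 := by
  intro x hx
  rcases hx with h | h | h | h | h <;> subst h <;>
    simp only [map_mul, map_pow, map_inv, FreeGroup.lift_apply_of, gmap] <;> decide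

/-- The retraction. -/
def pihom : GLplus →* DihedralGroup 8 := PresentedGroup.toGroup gmap_rels

lemma pi_shat : pihom shat = DihedralGroup.r 1 := PresentedGroup.toGroup.of gmap_rels
lemma pi_rhat : pihom rhat = DihedralGroup.sr 0 := PresentedGroup.toGroup.of gmap_rels

lemma pi_F : ∀ x, pihom (Fhom x) = x := by
  intro x
  cases x with
  | r i =>
      show pihom (Sp i) = _
      rw [Sp, map_pow, pi_shat, DihedralGroup.r_one_pow]
      simp [ZMod.natCast_val, ZMod.cast_id]
  | sr i =>
      show pihom (rhat * Sp i) = _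
      rw [map_mul, pi_rhat, Sp, map_pow, pi_shat, DihedralGroup.r_one_pow,
        DihedralGroup.sr_mul_r]
      simp [ZMod.natCast_val, ZMod.cast_id]

lemma F_inj : Function.Injective Fhom := Function.LeftInverse.injective pi_F

lemma F_range : Fhom.range = Subgroup.closure ({shat, rhat} : Set GLplus) := by
  apply le_antisymm
  · rintro _ ⟨x, rfl⟩
    cases x with
    | r i =>
        exact pow_mem (Subgroup.subset_closure (by simp)) _
    | sr i =>
        exact mul_mem (Subgroup.subset_closure (by simp))
          (pow_mem (Subgroup.subset_closure (by simp)) _)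
  · rw [Subgroup.closure_le]
    rintro x (rfl | rfl)
    · exact ⟨DihedralGroup.r 1, by show Sp 1 = shat; rw [Sp, show (1 : ZMod 8).val = 1 from rfl, pow_one]⟩
    · exact ⟨DihedralGroup.sr 0, by show rhat * Sp 0 = rhat; simp [Sp, ZMod.val_zero]⟩

/-- The map `DihedralGroup 8 → GL⁺(2,ℤ)`, `r i ↦ ŝ^i`, `sr i ↦ r̂·ŝ^i`, is an
injective group homomorphism; hence `ŝ` and `r̂` generate a subgroup of `GL⁺(2,ℤ)`
isomorphic to the dihedral group of order `16`. -/
theorem dihedral16_embeds_in_glplus :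
    ∃ f : DihedralGroup 8 →* GLplus,
      Function.Injective f ∧
      (∀ i : ZMod 8, f (DihedralGroup.r i) = shat ^ i.val) ∧
      (∀ i : ZMod 8, f (DihedralGroup.sr i) = rhat * shat ^ i.val) ∧
      Nonempty (DihedralGroup 8 ≃* (Subgroup.closure ({shat, rhat} : Set GLplus))) := by
  exact ⟨Fhom, F_inj, fun i => rfl, fun i => rfl,
    ⟨(MonoidHom.ofInjective F_inj).trans (MulEquiv.subgroupCongr F_range)⟩⟩
end
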